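/- arXiv:2305.09282 — 2 statements merged into one kernel-verified Lean document; each statement's English description precedes it below -/
import Mathlib

section
/- Properties of row and column projection matrices of a singular-value-thresholded matrix: Let M ∈ ℝ^{n×p}, λ ≥ 0, and M^{(λ)} = SVT_λ(M). Define Π^row_A = A^† A and Π^col_A = A A^† for any matrix A. Then: (1) Π^row_{M^{(λ)}} is an orthogonal projection in ℝ^p with rank(Π^row_{M^{(λ)}}) = rank(M^{(λ)}); (2) Π^col_{M^{(λ)}} is an orthogonal projection in ℝ^n with rank(Π^col_{M^{(λ)}}) = rank(M^{(λ)}); (3) M · Π^row_{M^{(λ)}} · M^† = Π^col_{M^{(λ)}} and M^† · Π^col_{M^{(λ)}} · M = Π^row_{M^{(λ)}}. -/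
open MeasureTheory Matrix Filter
open scoped ENNReal NNReal Topology Classical

noncomputable section

namespace FrechetPCR

/-- The four Penrose conditions characterizing the Moore–Penrose pseudoinverse. -/
def IsMoorePenrose {n m : ℕ} (A : Matrix (Fin n) (Fin m) ℝ) (B : Matrix (Fin m) (Fin n) ℝ) : Prop :=
  A * B * A = A ∧ B * A * B = B ∧ (A * B)ᵀ = A * B ∧ (B * A)ᵀ = B * A

/-- The Moore–Penrose pseudoinverse of a real matrix (it exists and is unique). -/
def pinv {n m : ℕ} (A : Matrix (Fin n) (Fin m) ℝ) : Matrix (Fin m) (Fin n) ℝ :=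
  if h : ∃ B, IsMoorePenrose A B then h.choose else 0

/-- Spectral projection of a symmetric matrix onto the span of eigenvectors
with eigenvalue > t. -/
def specProjGT {m : ℕ} (S : Matrix (Fin m) (Fin m) ℝ) (t : ℝ) : Matrix (Fin m) (Fin m) ℝ :=
  if hS : S.IsHermitian then
    (hS.eigenvectorUnitary : Matrix (Fin m) (Fin m) ℝ) *
      Matrix.diagonal (fun i => if t < hS.eigenvalues i then (1 : ℝ) else 0) *
      star (hS.eigenvectorUnitary : Matrix (Fin m) (Fin m) ℝ)
  else 0

/-- Hard singular value thresholding: retains the part of `A` corresponding to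
singular values exceeding `l` (for `l ≥ 0`): if `A = Σ sᵢ uᵢ vᵢᵀ` is an SVD then
`SVT l A = Σ sᵢ 1{sᵢ > l} uᵢ vᵢᵀ = A · Π` where `Π` is the spectral projection of
`AᵀA` onto eigenvalues `> l²`. -/
def SVT {n m : ℕ} (l : ℝ) (A : Matrix (Fin n) (Fin m) ℝ) : Matrix (Fin n) (Fin m) ℝ :=
  A * specProjGT (Aᵀ * A) (l ^ 2)

/-- Mahalanobis seminorm of `v` induced by the positive semidefinite matrix `S`. -/
def mahal {p : ℕ} (S : Matrix (Fin p) (Fin p) ℝ) (v : Fin p → ℝ) : ℝ :=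
  Real.sqrt (v ⬝ᵥ pinv S *ᵥ v)

/-- Euclidean (ℓ²) norm of a vector. -/
def euclNorm {n : ℕ} (v : Fin n → ℝ) : ℝ :=
  Real.sqrt (∑ i, v i ^ 2)

/-- Spectral (ℓ²-operator) norm of a matrix. -/
def spectralNorm {n m : ℕ} (A : Matrix (Fin n) (Fin m) ℝ) : ℝ :=
  ‖(Matrix.toEuclideanLin A).toContinuousLinearMap‖

/-- `σ^λ(A)`: the smallest singular value of `A` exceeding `l`
(with junk value `sInf ∅ = 0` when no singular value exceeds `l`). -/
def sigmaGT {n m : ℕ} (A : Matrix (Fin n) (Fin m) ℝ) (l : ℝ) : ℝ :=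
  sInf {s : ℝ | 0 ≤ s ∧ l < s ∧ s ^ 2 ∈ spectrum ℝ (Aᵀ * A)}

/-- Covariate mean of a measure on ℝ^p × M. -/
def covMean {p : ℕ} {M : Type*} [MeasurableSpace M] (ν : Measure ((Fin p → ℝ) × M)) :
    Fin p → ℝ :=
  ∫ z, z.1 ∂ν

/-- Covariate covariance of a measure on ℝ^p × M. -/
def covCov {p : ℕ} {M : Type*} [MeasurableSpace M] (ν : Measure ((Fin p → ℝ) × M)) :
    Matrix (Fin p) (Fin p) ℝ :=
  Matrix.of fun i j => ∫ z, (z.1 i - covMean ν i) * (z.1 j - covMean ν j) ∂ν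

/-- λ-regularized weight function
`w^λ_ν(x',x) = 1 + (x'−μ_ν)ᵀ [SVT_λ(Σ_ν)]† (x−μ_ν)`. -/
def weight {p : ℕ} {M : Type*} [MeasurableSpace M] (l : ℝ) (ν : Measure ((Fin p → ℝ) × M))
    (x' x : Fin p → ℝ) : ℝ :=
  1 + (x' - covMean ν) ⬝ᵥ pinv (SVT l (covCov ν)) *ᵥ (x - covMean ν)

/-- λ-regularized Fréchet risk `R^λ_ν(y;x) = E_ν[ w^λ_ν(X,x) · d²(Y,y) ]`. -/
def risk {p : ℕ} {M : Type*} [MetricSpace M] [MeasurableSpace M] (l : ℝ)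
    (ν : Measure ((Fin p → ℝ) × M)) (y : M) (x : Fin p → ℝ) : ℝ :=
  ∫ z, weight l ν z.1 x * dist z.2 y ^ 2 ∂ν

/-- Empirical measure of a finite dataset. -/
def empOf {E : Type*} [MeasurableSpace E] {n : ℕ} (D : Fin n → E) : Measure E :=
  (n : ℝ≥0∞)⁻¹ • ∑ i, Measure.dirac (D i)

/-- Empirical measure of the first `n` elements of a sequence of observations. -/
def empSeq {E : Type*} [MeasurableSpace E] (D : ℕ → E) (n : ℕ) : Measure E :=
  (n : ℝ≥0∞)⁻¹ • ∑ i ∈ Finset.range n, Measure.dirac (D i)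

/-- ε-covering number of a set in a metric space: the minimal cardinality of a cover
by closed ε-balls (`⊤` if no finite cover exists). -/
def coveringNumber {M : Type*} [MetricSpace M] (S : Set M) (ε : ℝ) : ℝ≥0∞ :=
  ⨅ (t : Finset M) (_ : S ⊆ ⋃ y ∈ t, Metric.closedBall y ε), (t.card : ℝ≥0∞)

/-- The n×n centering matrix `I − (1/n) 1ₙ 1ₙᵀ`. -/
def centering (n : ℕ) : Matrix (Fin n) (Fin n) ℝ :=
  1 - (n : ℝ)⁻¹ • Matrix.of fun _ _ => (1 : ℝ)


variable {m : ℕ} {S : Matrix (Fin m) (Fin m) ℝ}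

def fd (hS : S.IsHermitian) (f : ℝ → ℝ) : Matrix (Fin m) (Fin m) ℝ :=
  (hS.eigenvectorUnitary : Matrix (Fin m) (Fin m) ℝ) *
    Matrix.diagonal (f ∘ hS.eigenvalues) *
    star (hS.eigenvectorUnitary : Matrix (Fin m) (Fin m) ℝ)

lemma hU1 (hS : S.IsHermitian) :
    star (hS.eigenvectorUnitary : Matrix (Fin m) (Fin m) ℝ) *
      (hS.eigenvectorUnitary : Matrix (Fin m) (Fin m) ℝ) = 1 := by
  simpa using unitary.coe_star_mul_self hS.eigenvectorUnitary

lemma fd_mul (hS : S.IsHermitian) (f g : ℝ → ℝ) :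
    fd hS f * fd hS g = fd hS (fun x => f x * g x) := by
  unfold fd
  rw [mul_assoc, mul_assoc, ← mul_assoc (star _) _ _, ← mul_assoc (star _) _ _,
    hU1 hS, one_mul, ← mul_assoc, ← mul_assoc,
    mul_assoc (hS.eigenvectorUnitary : Matrix (Fin m) (Fin m) ℝ) (Matrix.diagonal _)
      (Matrix.diagonal _), diagonal_mul_diagonal]
  congr 2

lemma star_eq_transpose (hS : S.IsHermitian) :
    star (hS.eigenvectorUnitary : Matrix (Fin m) (Fin m) ℝ) =
      (hS.eigenvectorUnitary : Matrix (Fin m) (Fin m) ℝ)ᵀ := by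
  ext i j
  simp [Matrix.star_apply]

lemma fd_transpose (hS : S.IsHermitian) (f : ℝ → ℝ) : (fd hS f)ᵀ = fd hS f := by
  unfold fd
  rw [star_eq_transpose hS, transpose_mul, transpose_mul, transpose_transpose,
    diagonal_transpose, mul_assoc]

lemma fd_id (hS : S.IsHermitian) : fd hS (fun x => x) = S := by
  have h := hS.spectral_theorem
  unfold fd
  conv_rhs => rw [h]
  congr 2

lemma fd_congr (hS : S.IsHermitian) {f g : ℝ → ℝ} (h : ∀ x, f x = g x) :
    fd hS f = fd hS g := by
  have hc : f ∘ hS.eigenvalues = g ∘ hS.eigenvalues := funext fun i => h _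
  unfold fd
  rw [hc]

lemma conjT_eq_transpose {a b : ℕ} (M : Matrix (Fin a) (Fin b) ℝ) : Mᴴ = Mᵀ := by
  ext i j; simp [conjTranspose_apply]

lemma herm_tmul {n : ℕ} (A : Matrix (Fin n) (Fin m) ℝ) : (Aᵀ * A).IsHermitian := by
  have h := isHermitian_conjTranspose_mul_self A
  rwa [conjT_eq_transpose] at h

lemma ker_aux {n k : ℕ} (A : Matrix (Fin n) (Fin m) ℝ) (X : Matrix (Fin m) (Fin k) ℝ)
    (h : Aᵀ * A * X = 0) : A * X = 0 := by
  have h2 : (A * X)ᴴ * (A * X) = 0 := by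
    rw [conjT_eq_transpose, transpose_mul, Matrix.mul_assoc Xᵀ Aᵀ (A * X),
      ← Matrix.mul_assoc Aᵀ A X, h, Matrix.mul_zero]
  exact conjTranspose_mul_self_eq_zero.mp h2

def pf : ℝ → ℝ := fun x => if x = 0 then 0 else x⁻¹
def qf (t : ℝ) : ℝ → ℝ := fun x => if t < x then 1 else 0

section Akey

variable {n : ℕ} (A : Matrix (Fin n) (Fin m) ℝ) (hS : (Aᵀ * A).IsHermitian)

lemma S_fd (f : ℝ → ℝ) : Aᵀ * A * fd hS f = fd hS (fun x => x * f x) :=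
  (congrArg (· * fd hS f) (fd_id hS).symm).trans (fd_mul hS _ f)

lemma fd_S (f : ℝ → ℝ) : fd hS f * (Aᵀ * A) = fd hS (fun x => f x * x) :=
  (congrArg (fd hS f * ·) (fd_id hS).symm).trans (fd_mul hS f _)

lemma L2 (f g : ℝ → ℝ) :
    fd hS f * (Aᵀ * (A * fd hS g)) = fd hS (fun x => f x * (x * g x)) := by
  rw [← Matrix.mul_assoc Aᵀ A (fd hS g), S_fd A hS g, fd_mul]

lemma L1 {k : ℕ} (f g : ℝ → ℝ) (X : Matrix (Fin m) (Fin k) ℝ) :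
    fd hS f * (Aᵀ * (A * (fd hS g * X))) = fd hS (fun x => f x * (x * g x)) * X := by
  rw [← Matrix.mul_assoc A (fd hS g) X, ← Matrix.mul_assoc Aᵀ (A * fd hS g) X,
    ← Matrix.mul_assoc Aᵀ A (fd hS g), S_fd A hS g,
    ← Matrix.mul_assoc (fd hS f) _ X, fd_mul]

lemma A_mul_proj : A * fd hS (fun x => pf x * x) = A := by
  have hz : Aᵀ * A * (1 - fd hS (fun x => pf x * x)) = 0 := by
    rw [Matrix.mul_sub, Matrix.mul_one, S_fd A hS]
    refine sub_eq_zero.mpr ?_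
    refine ((fd_id hS).symm).trans (fd_congr hS fun x => ?_)
    by_cases hx : x = 0 <;> simp [pf, hx]
  have h0 := ker_aux A _ hz
  rw [Matrix.mul_sub, Matrix.mul_one, sub_eq_zero] at h0
  exact h0.symm

lemma spec_eq (t : ℝ) : specProjGT (Aᵀ * A) t = fd hS (qf t) := by
  unfold specProjGT
  rw [dif_pos hS]
  rfl

end Akey

lemma penrose_unique {n : ℕ} {A : Matrix (Fin n) (Fin m) ℝ} {B C : Matrix (Fin m) (Fin n) ℝ}
    (hB : IsMoorePenrose A B) (hC : IsMoorePenrose A C) : B = C := by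
  obtain ⟨hB1, hB2, hB3, hB4⟩ := hB
  obtain ⟨hC1, hC2, hC3, hC4⟩ := hC
  have hAB : A * B = A * C := by
    have h1 : A * C * (A * B) = A * B := by
      rw [← Matrix.mul_assoc (A * C) A B, hC1]
    calc A * B = (A * B)ᵀ := hB3.symm
    _ = (A * C * (A * B))ᵀ := by rw [h1]
    _ = (A * B)ᵀ * (A * C)ᵀ := by rw [transpose_mul]
    _ = A * B * (A * C) := by rw [hB3, hC3]
    _ = A * C := by rw [← Matrix.mul_assoc (A * B) A C, hB1]
  have hBA : B * A = C * A := by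
    have h1 : B * A * (C * A) = B * A := by
      rw [Matrix.mul_assoc B A (C * A), ← Matrix.mul_assoc A C A, hC1]
    calc B * A = (B * A)ᵀ := hB4.symm
    _ = (B * A * (C * A))ᵀ := by rw [h1]
    _ = (C * A)ᵀ * (B * A)ᵀ := by rw [transpose_mul]
    _ = C * A * (B * A) := by rw [hB4, hC4]
    _ = C * A := by rw [Matrix.mul_assoc C A (B * A), ← Matrix.mul_assoc A B A, hB1]
  calc B = B * A * B := hB2.symm
  _ = B * (A * C) := by rw [Matrix.mul_assoc B A B, hAB]
  _ = C * A * C := by rw [← Matrix.mul_assoc B A C, hBA]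
  _ = C := hC2

lemma mp_pinvA {n : ℕ} (A : Matrix (Fin n) (Fin m) ℝ) (hS : (Aᵀ * A).IsHermitian) :
    IsMoorePenrose A (fd hS pf * Aᵀ) := by
  refine ⟨?_, ?_, ?_, ?_⟩
  · simp only [Matrix.mul_assoc]
    rw [fd_S A hS pf]
    exact A_mul_proj A hS
  · simp only [Matrix.mul_assoc]
    rw [L1 A hS pf pf Aᵀ]
    congr 1
    refine fd_congr hS fun x => ?_
    by_cases hx : x = 0 <;> simp [pf, hx]
  · rw [transpose_mul, transpose_mul, transpose_transpose, fd_transpose, Matrix.mul_assoc]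
  · rw [Matrix.mul_assoc (fd hS pf) Aᵀ A, fd_S A hS, fd_transpose]

lemma mp_pinvT {n : ℕ} (A : Matrix (Fin n) (Fin m) ℝ) (hS : (Aᵀ * A).IsHermitian) (t : ℝ)
    (ht : 0 ≤ t) :
    IsMoorePenrose (A * fd hS (qf t)) (fd hS (fun x => qf t x * pf x) * Aᵀ) := by
  refine ⟨?_, ?_, ?_, ?_⟩
  · simp only [Matrix.mul_assoc]
    rw [L2 A hS (fun x => qf t x * pf x) (qf t), fd_mul]
    congr 1
    refine fd_congr hS fun x => ?_
    by_cases hx : x = 0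
    · simp [qf, pf, hx, not_lt.2 ht]
    · by_cases hqx : t < x <;> simp [qf, pf, hqx, hx]
  · simp only [Matrix.mul_assoc]
    rw [L1 A hS (fun x => qf t x * pf x) (qf t) (fd hS (fun x => qf t x * pf x) * Aᵀ),
      ← Matrix.mul_assoc _ (fd hS (fun x => qf t x * pf x)) Aᵀ, fd_mul]
    congr 1
    refine fd_congr hS fun x => ?_
    by_cases hx : x = 0
    · simp [qf, pf, hx, not_lt.2 ht]
    · by_cases hqx : t < x <;> simp [qf, pf, hqx, hx]
  · simp only [Matrix.mul_assoc]
    rw [← Matrix.mul_assoc (fd hS (qf t)) (fd hS (fun x => qf t x * pf x)) Aᵀ, fd_mul,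
      transpose_mul, transpose_mul, transpose_transpose, fd_transpose, Matrix.mul_assoc]
  · simp only [Matrix.mul_assoc]
    rw [L2 A hS (fun x => qf t x * pf x) (qf t), fd_transpose]

lemma pinv_eq {n : ℕ} {A : Matrix (Fin n) (Fin m) ℝ} {B : Matrix (Fin m) (Fin n) ℝ}
    (hB : IsMoorePenrose A B) : pinv A = B := by
  have h : ∃ C, IsMoorePenrose A C := ⟨B, hB⟩
  unfold pinv
  rw [dif_pos h]
  exact penrose_unique h.choose_spec hB

lemma rank_pinv_mul {n : ℕ} {A : Matrix (Fin n) (Fin m) ℝ} {B : Matrix (Fin m) (Fin n) ℝ}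
    (hB : IsMoorePenrose A B) : (B * A).rank = A.rank := by
  refine le_antisymm (rank_mul_le_right _ _) ?_
  calc A.rank = (A * (B * A)).rank := by rw [← Matrix.mul_assoc, hB.1]
  _ ≤ (B * A).rank := rank_mul_le_right _ _

lemma rank_mul_pinv {n : ℕ} {A : Matrix (Fin n) (Fin m) ℝ} {B : Matrix (Fin m) (Fin n) ℝ}
    (hB : IsMoorePenrose A B) : (A * B).rank = A.rank := by
  refine le_antisymm (rank_mul_le_left _ _) ?_
  calc A.rank = ((A * B) * A).rank := by rw [hB.1]
  _ ≤ (A * B).rank := rank_mul_le_left _ _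

/-- **Properties of row and column projection matrices of an SVT-thresholded matrix**
(Lemma D.1). Here `Π^row_A = A† A` and `Π^col_A = A A†`. -/
theorem svt_projection_properties
    {n p : ℕ} (A : Matrix (Fin n) (Fin p) ℝ) (l : ℝ) (hl : 0 ≤ l) :
    -- (1) Π^row_{A^{(λ)}} is an orthogonal projection of rank = rank A^{(λ)}
    ((pinv (SVT l A) * SVT l A)ᵀ = pinv (SVT l A) * SVT l A ∧
      (pinv (SVT l A) * SVT l A) * (pinv (SVT l A) * SVT l A) = pinv (SVT l A) * SVT l A ∧
      (pinv (SVT l A) * SVT l A).rank = (SVT l A).rank) ∧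
    -- (2) Π^col_{A^{(λ)}} is an orthogonal projection of rank = rank A^{(λ)}
    ((SVT l A * pinv (SVT l A))ᵀ = SVT l A * pinv (SVT l A) ∧
      (SVT l A * pinv (SVT l A)) * (SVT l A * pinv (SVT l A)) = SVT l A * pinv (SVT l A) ∧
      (SVT l A * pinv (SVT l A)).rank = (SVT l A).rank) ∧
    -- (3) A Π^row_{A^{(λ)}} A† = Π^col_{A^{(λ)}} and A† Π^col_{A^{(λ)}} A = Π^row_{A^{(λ)}}
    (A * (pinv (SVT l A) * SVT l A) * pinv A = SVT l A * pinv (SVT l A) ∧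
      pinv A * (SVT l A * pinv (SVT l A)) * A = pinv (SVT l A) * SVT l A) := by
  have hS : (Aᵀ * A).IsHermitian := herm_tmul A
  set t := l ^ 2 with htdef
  have ht : 0 ≤ t := sq_nonneg l
  have hTdef : SVT l A = A * fd hS (qf t) := by
    unfold SVT
    rw [spec_eq A hS]
  have hMPT : IsMoorePenrose (SVT l A) (fd hS (fun x => qf t x * pf x) * Aᵀ) := by
    rw [hTdef]; exact mp_pinvT A hS t ht
  have hMPA : IsMoorePenrose A (fd hS pf * Aᵀ) := mp_pinvA A hS
  have hpT : pinv (SVT l A) = fd hS (fun x => qf t x * pf x) * Aᵀ := pinv_eq hMPT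
  have hpA : pinv A = fd hS pf * Aᵀ := pinv_eq hMPA
  have hMPT' : IsMoorePenrose (SVT l A) (pinv (SVT l A)) := by rw [hpT]; exact hMPT
  have hrow : pinv (SVT l A) * SVT l A = fd hS (qf t) := by
    rw [hpT, hTdef, Matrix.mul_assoc, L2 A hS]
    refine fd_congr hS fun x => ?_
    by_cases hx : x = 0
    · simp [qf, pf, hx, not_lt.2 ht]
    · by_cases hqx : t < x <;> simp [qf, pf, hqx, hx]
  refine ⟨⟨?_, ?_, rank_pinv_mul hMPT'⟩, ⟨hMPT'.2.2.1, ?_, rank_mul_pinv hMPT'⟩, ?_, ?_⟩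
  · rw [hrow, fd_transpose]
  · rw [hrow, fd_mul]
    refine fd_congr hS fun x => ?_
    by_cases hqx : t < x <;> simp [qf, hqx]
  · rw [Matrix.mul_assoc (SVT l A) (pinv (SVT l A)) _,
      ← Matrix.mul_assoc (pinv (SVT l A)) (SVT l A) (pinv (SVT l A)), hMPT'.2.1]
  · rw [hrow, hpA, hpT, hTdef]
    simp only [Matrix.mul_assoc]
    rw [← Matrix.mul_assoc (fd hS (qf t)) (fd hS pf) Aᵀ, fd_mul,
      ← Matrix.mul_assoc (fd hS (qf t)) (fd hS (fun x => qf t x * pf x)) Aᵀ, fd_mul]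
    congr 2
    refine fd_congr hS fun x => ?_
    by_cases hqx : t < x <;> simp [qf, hqx]
  · rw [hrow, hpA, hpT, hTdef]
    simp only [Matrix.mul_assoc]
    rw [fd_S A hS, fd_mul, L2 A hS]
    refine fd_congr hS fun x => ?_
    by_cases hx : x = 0
    · simp [qf, pf, hx, not_lt.2 ht]
    · by_cases hqx : t < x <;> simp [qf, pf, hqx, hx]

end FrechetPCR
end
end

section
/- Connection to principal component regression: Let M = ℝ with the usual metric, and let D_n = {(x_i,y_i)}_{i=1}^n ⊂ ℝ^p × ℝ be a finite dataset identified with its empirical measure. For every λ ≥ 0 and every x ∈ ℝ^p, the λ-regularized Fréchet regression function satisfies φ^λ_{D_n}(x) = ȳ + β̂_λ^T (x − μ_{D_n}), where ȳ = (1/n)Σ_{i=1}^n y_i and β̂_λ = [ SVT_λ(Σ_{D_n}) ]^† · ( (1/n) Σ_{i=1}^n (x_i − μ_{D_n})·(y_i − ȳ) ). -/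
open MeasureTheory Matrix Filter
open scoped ENNReal NNReal Topology Classical

noncomputable section

namespace FrechetPCR

/-! ### Auxiliary lemmas -/

section Aux

lemma integral_empOf {E F : Type*} [MeasurableSpace E] [MeasurableSingletonClass E]
    [NormedAddCommGroup F] [NormedSpace ℝ F] [CompleteSpace F] {n : ℕ} (D : Fin n → E)
    (f : E → F) : ∫ z, f z ∂(empOf D) = (n : ℝ)⁻¹ • ∑ i, f (D i) := by
  rw [empOf, integral_smul_measure, integral_finset_sum_measure]
  · simp only [integral_dirac]
    simp
  · intro i _
    exact (integrable_const (f (D i))).congr (ae_eq_dirac f).symm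

lemma mp_unique {n m : ℕ} {A : Matrix (Fin n) (Fin m) ℝ} {B C : Matrix (Fin m) (Fin n) ℝ}
    (hB : IsMoorePenrose A B) (hC : IsMoorePenrose A C) : B = C := by
  obtain ⟨hB1, hB2, hB3, hB4⟩ := hB
  obtain ⟨hC1, hC2, hC3, hC4⟩ := hC
  have hAB : A * B = A * C := by
    calc A * B = (A * B)ᵀ := hB3.symm
    _ = Bᵀ * Aᵀ := by rw [transpose_mul]
    _ = Bᵀ * (A * C * A)ᵀ := by rw [hC1]
    _ = Bᵀ * (Aᵀ * (A * C)ᵀ) := by rw [transpose_mul]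
    _ = (Bᵀ * Aᵀ) * (A * C)ᵀ := by rw [Matrix.mul_assoc]
    _ = (A * B)ᵀ * (A * C) := by rw [← transpose_mul, hC3]
    _ = (A * B) * (A * C) := by rw [hB3]
    _ = (A * B * A) * C := by simp only [Matrix.mul_assoc]
    _ = A * C := by rw [hB1]
  have hBA : B * A = C * A := by
    calc B * A = (B * A)ᵀ := hB4.symm
    _ = Aᵀ * Bᵀ := by rw [transpose_mul]
    _ = (A * C * A)ᵀ * Bᵀ := by rw [hC1]
    _ = (A * (C * A))ᵀ * Bᵀ := by rw [Matrix.mul_assoc]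
    _ = ((C * A)ᵀ * Aᵀ) * Bᵀ := by rw [transpose_mul]
    _ = ((C * A) * Aᵀ) * Bᵀ := by rw [hC4]
    _ = (C * A) * (Aᵀ * Bᵀ) := by rw [Matrix.mul_assoc]
    _ = (C * A) * (B * A)ᵀ := by rw [← transpose_mul]
    _ = (C * A) * (B * A) := by rw [hB4]
    _ = C * (A * B * A) := by simp only [Matrix.mul_assoc]
    _ = C * A := by rw [hB1]
  calc B = B * A * B := hB2.symm
  _ = C * A * B := by rw [hBA]
  _ = C * (A * B) := by rw [Matrix.mul_assoc]
  _ = C * (A * C) := by rw [hAB]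
  _ = C * A * C := by rw [Matrix.mul_assoc]
  _ = C := hC2

lemma mp_transpose {n m : ℕ} {A : Matrix (Fin n) (Fin m) ℝ} {B : Matrix (Fin m) (Fin n) ℝ}
    (h : IsMoorePenrose A B) : IsMoorePenrose Aᵀ Bᵀ := by
  obtain ⟨h1, h2, h3, h4⟩ := h
  refine ⟨?_, ?_, ?_, ?_⟩
  · rw [← transpose_mul, ← transpose_mul, ← Matrix.mul_assoc, h1]
  · rw [← transpose_mul, ← transpose_mul, ← Matrix.mul_assoc, h2]
  · rw [← transpose_mul, transpose_transpose, h4]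
  · rw [← transpose_mul, transpose_transpose, h3]

lemma pinv_symm {m : ℕ} {A : Matrix (Fin m) (Fin m) ℝ} (hA : Aᵀ = A) :
    (pinv A)ᵀ = pinv A := by
  unfold pinv
  split
  · next h =>
    have h1 := h.choose_spec
    have h2 : IsMoorePenrose A (h.choose)ᵀ := by
      have := mp_transpose h1
      rwa [hA] at this
    exact mp_unique h2 h1
  · simp

lemma comm_diag {m : ℕ} {T : Matrix (Fin m) (Fin m) ℝ} {e : Fin m → ℝ} (f : ℝ → ℝ)
    (h : T * Matrix.diagonal e = Matrix.diagonal e * T) :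
    T * Matrix.diagonal (fun i => f (e i)) = Matrix.diagonal (fun i => f (e i)) * T := by
  ext i j
  have h' : T i j * e j = e i * T i j := by
    have := Matrix.ext_iff.mpr h i j
    simpa [Matrix.mul_diagonal, Matrix.diagonal_mul] using this
  simp only [Matrix.mul_diagonal, Matrix.diagonal_mul]
  rcases eq_or_ne (T i j) 0 with h0 | h0
  · simp [h0]
  · have he : e j = e i := by
      have : (e j - e i) * T i j = 0 := by ring_nf; linarith [h']
      rcases mul_eq_zero.mp this with h | h
      · linarith
      · exact absurd h h0
    rw [he]
    ring

lemma conj_cancel {m : ℕ} {U A B : Matrix (Fin m) (Fin m) ℝ}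
    (hU1 : U * star U = 1) (h : star U * A * U = star U * B * U) : A = B := by
  have key : ∀ M : Matrix (Fin m) (Fin m) ℝ, U * (star U * M * U) * star U = M := by
    intro M
    calc U * (star U * M * U) * star U = (U * star U) * M * (U * star U) := by
          simp only [Matrix.mul_assoc]
    _ = M := by rw [hU1, Matrix.one_mul, Matrix.mul_one]
  calc A = U * (star U * A * U) * star U := (key A).symm
  _ = U * (star U * B * U) * star U := by rw [h]
  _ = B := key B

lemma specProjGT_comm {m : ℕ} {H X : Matrix (Fin m) (Fin m) ℝ} (hH : H.IsHermitian)
    (hX : X * H = H * X) (t : ℝ) :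
    X * specProjGT H t = specProjGT H t * X := by
  rw [specProjGT, dif_pos hH]
  set U : Matrix (Fin m) (Fin m) ℝ := (hH.eigenvectorUnitary : Matrix (Fin m) (Fin m) ℝ) with hU
  have hU1 : U * star U = 1 := (Matrix.mem_unitaryGroup_iff).mp hH.eigenvectorUnitary.2
  have hU2 : star U * U = 1 := (Matrix.mem_unitaryGroup_iff').mp hH.eigenvectorUnitary.2
  have hsp : star U * H * U = Matrix.diagonal hH.eigenvalues := by
    have := hH.conjStarAlgAut_star_eigenvectorUnitary
    simp only [Unitary.conjStarAlgAut_apply, Unitary.coe_star, star_star] at this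
    rwa [RCLike.ofReal_real_eq_id, Function.id_comp] at this
  set T : Matrix (Fin m) (Fin m) ℝ := star U * X * U with hT
  have hTe : T * Matrix.diagonal hH.eigenvalues = Matrix.diagonal hH.eigenvalues * T := by
    rw [← hsp]
    calc (star U * X * U) * (star U * H * U)
        = star U * (X * (U * star U) * H) * U := by simp only [Matrix.mul_assoc]
    _ = star U * (X * H) * U := by rw [hU1, Matrix.mul_one]
    _ = star U * (H * X) * U := by rw [hX]
    _ = star U * (H * (U * star U) * X) * U := by rw [hU1, Matrix.mul_one]
    _ = (star U * H * U) * (star U * X * U) := by simp only [Matrix.mul_assoc]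
  set D : Matrix (Fin m) (Fin m) ℝ :=
    Matrix.diagonal (fun i => if t < hH.eigenvalues i then (1 : ℝ) else 0) with hD
  have hTD : T * D = D * T := by
    have := comm_diag (fun s => if t < s then (1 : ℝ) else 0) hTe
    simpa [hD] using this
  apply conj_cancel hU1
  calc star U * (X * (U * D * star U)) * U
      = (star U * X * U) * D * (star U * U) := by simp only [Matrix.mul_assoc]
  _ = T * D := by rw [hU2, Matrix.mul_one, hT]
  _ = D * T := hTD
  _ = (star U * U) * D * (star U * X * U) := by rw [hU2, Matrix.one_mul, hT]
  _ = star U * (U * D * star U * X) * U := by simp only [Matrix.mul_assoc]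

lemma specProjGT_symm {m : ℕ} (S : Matrix (Fin m) (Fin m) ℝ) (t : ℝ) :
    (specProjGT S t)ᵀ = specProjGT S t := by
  rw [specProjGT]
  split
  · next hS =>
    set U : Matrix (Fin m) (Fin m) ℝ := (hS.eigenvectorUnitary : Matrix (Fin m) (Fin m) ℝ) with hU
    have hstar : star U = Uᵀ := by
      rw [Matrix.star_eq_conjTranspose, Matrix.conjTranspose_eq_transpose_of_trivial]
    rw [Matrix.transpose_mul, Matrix.transpose_mul, Matrix.diagonal_transpose, hstar,
      Matrix.transpose_transpose, Matrix.mul_assoc]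
  · simp

lemma SVT_symm {m : ℕ} {S : Matrix (Fin m) (Fin m) ℝ} (hS : Sᵀ = S) (l : ℝ) :
    (SVT l S)ᵀ = SVT l S := by
  have hH : (Sᵀ * S).IsHermitian := by
    rw [← Matrix.conjTranspose_eq_transpose_of_trivial]
    exact isHermitian_conjTranspose_mul_self S
  have hcomm : S * (Sᵀ * S) = (Sᵀ * S) * S := by
    rw [hS, ← Matrix.mul_assoc]
  have h := specProjGT_comm hH hcomm (l ^ 2)
  rw [SVT, Matrix.transpose_mul, specProjGT_symm, h, hS]

lemma covCov_symm {p : ℕ} {M : Type*} [MeasurableSpace M] (ν : Measure ((Fin p → ℝ) × M)) :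
    (covCov ν)ᵀ = covCov ν := by
  ext i j
  simp only [Matrix.transpose_apply, covCov, Matrix.of_apply]
  simp_rw [mul_comm]

lemma sum_dotProduct' {k : ℕ} {ι : Type*} (s : Finset ι) (u : ι → Fin k → ℝ) (v : Fin k → ℝ) :
    (∑ i ∈ s, u i) ⬝ᵥ v = ∑ i ∈ s, u i ⬝ᵥ v := by
  simp only [dotProduct, Finset.sum_apply, Finset.sum_mul]
  exact Finset.sum_comm

lemma symm_mulVec_dot {k : ℕ} {P : Matrix (Fin k) (Fin k) ℝ} (hP : Pᵀ = P) (c u : Fin k → ℝ) :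
    (P *ᵥ c) ⬝ᵥ u = c ⬝ᵥ (P *ᵥ u) := by
  rw [dotProduct_mulVec c P u, ← mulVec_transpose, hP]

end Aux

/-- **Connection to principal component regression** (Section 3.2): for real responses, the
λ-regularized Fréchet regression function is the principal component regression predictor. -/
theorem pcr_connection
    {p n : ℕ} (hn : 0 < n)
    (xd : Fin n → Fin p → ℝ) (yd : Fin n → ℝ)
    (l : ℝ) (hl : 0 ≤ l) (x : Fin p → ℝ) :
    ∀ νD : Measure ((Fin p → ℝ) × ℝ), νD = empOf (fun i => (xd i, yd i)) →
    ∀ ybar : ℝ, ybar = (n : ℝ)⁻¹ * ∑ i, yd i →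
    ∀ βh : Fin p → ℝ,
      βh = pinv (SVT l (covCov νD)) *ᵥ
        ((n : ℝ)⁻¹ • ∑ i, (yd i - ybar) • (xd i - covMean νD)) →
    -- φ^λ_{D_n}(x) = ȳ + β̂_λᵀ (x − μ_{D_n}) : it is the unique minimizer of the risk
    (∀ y : ℝ, risk l νD (ybar + βh ⬝ᵥ (x - covMean νD)) x ≤ risk l νD y x) ∧
    (∀ y : ℝ, (∀ y' : ℝ, risk l νD y x ≤ risk l νD y' x) →
      y = ybar + βh ⬝ᵥ (x - covMean νD)) := by
  intro nuD hnu ybar hybar bh hbh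
  subst hnu hybar hbh
  set D : Fin n → (Fin p → ℝ) × ℝ := fun i => (xd i, yd i) with hD
  have hn' : (n : ℝ) ≠ 0 := Nat.cast_ne_zero.mpr hn.ne'
  set μ : Fin p → ℝ := covMean (empOf D) with hμdef
  have hμ : μ = (n : ℝ)⁻¹ • ∑ i, xd i := by
    rw [hμdef, covMean, integral_empOf D (fun z => z.1)]
  set ybar : ℝ := (n : ℝ)⁻¹ * ∑ i, yd i with hybar
  set P : Matrix (Fin p) (Fin p) ℝ := pinv (SVT l (covCov (empOf D))) with hP
  have hPsymm : Pᵀ = P := pinv_symm (SVT_symm (covCov_symm _) l)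
  set v : Fin p → ℝ := P *ᵥ (x - μ) with hv
  set w : Fin n → ℝ := fun i => weight l (empOf D) (xd i) x with hw
  have hwi : ∀ i, w i = 1 + (xd i - μ) ⬝ᵥ v := fun i => rfl
  set c : Fin p → ℝ := ∑ i, (yd i - ybar) • (xd i - μ) with hc
  set ystar : ℝ := ybar + (P *ᵥ ((n : ℝ)⁻¹ • c)) ⬝ᵥ (x - μ) with hystar
  have hsum0 : ∑ i, (xd i - μ) = (0 : Fin p → ℝ) := by
    have h1 : ∑ i : Fin n, (xd i - μ) = (∑ i, xd i) - (n : ℕ) • μ := by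
      rw [Finset.sum_sub_distrib, Finset.sum_const, Finset.card_univ, Fintype.card_fin]
    rw [h1, hμ, ← Nat.cast_smul_eq_nsmul ℝ, smul_smul, mul_inv_cancel₀ hn', one_smul, sub_self]
  have hS1 : ∑ i, w i = (n : ℝ) := by
    simp only [hwi]
    rw [Finset.sum_add_distrib, Finset.sum_const, Finset.card_univ, Fintype.card_fin,
      ← sum_dotProduct', hsum0, zero_dotProduct, add_zero, nsmul_eq_mul, mul_one]
  have hcy : ∑ i, yd i • (xd i - μ) = c := by
    have h1 : ∀ i : Fin n, yd i • (xd i - μ) = (yd i - ybar) • (xd i - μ) + ybar • (xd i - μ) := by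
      intro i
      rw [sub_smul, sub_add_cancel]
    rw [Finset.sum_congr rfl fun i _ => h1 i, Finset.sum_add_distrib, ← Finset.smul_sum,
      hsum0, smul_zero, add_zero, hc]
  have hS2 : ∑ i, w i * yd i = (n : ℝ) * ystar := by
    have h1 : ∀ i : Fin n, w i * yd i = yd i + (yd i • (xd i - μ)) ⬝ᵥ v := by
      intro i
      rw [hwi i, smul_dotProduct, smul_eq_mul]
      ring
    rw [Finset.sum_congr rfl fun i _ => h1 i, Finset.sum_add_distrib, ← sum_dotProduct',
      hcy]
    have h2 : (P *ᵥ ((n : ℝ)⁻¹ • c)) ⬝ᵥ (x - μ) = (n : ℝ)⁻¹ * (c ⬝ᵥ v) := by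
      rw [Matrix.mulVec_smul, smul_dotProduct, smul_eq_mul,
        symm_mulVec_dot hPsymm c (x - μ), hv]
    have h3 : ∑ i, yd i = (n : ℝ) * ybar := by
      rw [hybar, ← mul_assoc, mul_inv_cancel₀ hn', one_mul]
    rw [h3, hystar, h2]
    field_simp
  have hrisk : ∀ y : ℝ, risk l (empOf D) y x = (n : ℝ)⁻¹ * ∑ i, w i * (yd i - y) ^ 2 := by
    intro y
    rw [risk, integral_empOf D (fun z => weight l (empOf D) z.1 x * dist z.2 y ^ 2)]
    rw [smul_eq_mul]
    congr 1
    refine Finset.sum_congr rfl fun i _ => ?_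
    rw [Real.dist_eq, sq_abs]
  set C : ℝ := (n : ℝ)⁻¹ * ∑ i, w i * yd i ^ 2 with hC
  have key : ∀ y : ℝ, risk l (empOf D) y x = C - 2 * y * ystar + y ^ 2 := by
    intro y
    rw [hrisk y]
    have expand : ∑ i, w i * (yd i - y) ^ 2
        = (∑ i, w i * yd i ^ 2) - 2 * y * (∑ i, w i * yd i) + y ^ 2 * (∑ i, w i) := by
      rw [Finset.mul_sum, Finset.mul_sum, ← Finset.sum_sub_distrib, ← Finset.sum_add_distrib]
      refine Finset.sum_congr rfl fun i _ => ?_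
      ring
    rw [expand, hS1, hS2, hC]
    field_simp
  have hfinal : ∀ y : ℝ, risk l (empOf D) y x = risk l (empOf D) ystar x + (y - ystar) ^ 2 := by
    intro y
    rw [key y, key ystar]
    ring
  constructor
  · intro y
    rw [hfinal y]
    nlinarith [sq_nonneg (y - ystar)]
  · intro y hy
    have h1 := hy ystar
    rw [hfinal y] at h1
    have h2 : (y - ystar) ^ 2 ≤ 0 := by linarith
    have h3 : y - ystar = 0 := by nlinarith [sq_nonneg (y - ystar)]
    linarith

end FrechetPCR
end
end
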